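/- For dimensions 1 ≤ d ≤ 3, the function u ↦ K^{(2)}_{u,u}(0) = ∫_{ℝ^d}[K^{BTBM}_u(x)]² dx equals C_d u^{-d/4} for a constant C_d > 0, and in particular is strictly decreasing in u > 0. -/

import Mathlib

open MeasureTheory Real

/-- The standard `d`-dimensional Gaussian heat kernel with variance parameter `s`. -/
noncomputable def heatK (d : ℕ) (s : ℝ) (x : EuclideanSpace ℝ (Fin d)) : ℝ :=
  (2 * π * s) ^ (-(d : ℝ) / 2) * Real.exp (-‖x‖ ^ 2 / (2 * s))

/-- The Brownian-time Brownian motion density in dimension `d`. -/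
noncomputable def btbmK (d : ℕ) (t : ℝ) (x : EuclideanSpace ℝ (Fin d)) : ℝ :=
  2 * ∫ s in Set.Ioi (0 : ℝ),
    heatK d s x * ((2 * π * t) ^ (-(1 : ℝ) / 2) * Real.exp (-s ^ 2 / (2 * t)))

/-- The diagonal value at `0` of the `2`-Brownian-times Brownian motion density. -/
noncomputable def twoBtK (d : ℕ) (u v : ℝ) : ℝ :=
  4 * ∫ r₁ in Set.Ioi (0 : ℝ), ∫ r₂ in Set.Ioi (0 : ℝ),
    (2 * π * (r₁ + r₂)) ^ (-(d : ℝ) / 2) *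
      ((2 * π * u) ^ (-(1 : ℝ) / 2) * Real.exp (-r₁ ^ 2 / (2 * u))) *
      ((2 * π * v) ^ (-(1 : ℝ) / 2) * Real.exp (-r₂ ^ 2 / (2 * v)))

namespace TwoBtAux

/-- One-dimensional Gaussian subordinator density. -/
noncomputable def g (u r : ℝ) : ℝ := (2 * π * u) ^ (-(1 : ℝ) / 2) * Real.exp (-r ^ 2 / (2 * u))

/-- The heat kernel at the origin. -/
noncomputable def h (d : ℕ) (s : ℝ) : ℝ := (2 * π * s) ^ (-(d : ℝ) / 2)

/-- The two-variable integrand. -/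
noncomputable def P (d : ℕ) (u : ℝ) (p : ℝ × ℝ) : ℝ := h d (p.1 + p.2) * g u p.1 * g u p.2

/-- The dominating one-variable function. -/
noncomputable def fb (d : ℕ) (u r : ℝ) : ℝ :=
  r ^ (-((d : ℝ) / 4)) * Real.exp (-r ^ 2 / (2 * u))

lemma g_pos {u : ℝ} (hu : 0 < u) (r : ℝ) : 0 < g u r := by
  unfold g; positivity

lemma h_pos (d : ℕ) {s : ℝ} (hs : 0 < s) : 0 < h d s := by
  unfold h; positivity

lemma P_pos (d : ℕ) {u r₁ r₂ : ℝ} (hu : 0 < u) (h1 : 0 < r₁) (h2 : 0 < r₂) :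
    0 < P d u (r₁, r₂) := by
  have := h_pos d (show (0:ℝ) < r₁ + r₂ by linarith)
  have := g_pos hu r₁
  have := g_pos hu r₂
  unfold P; positivity

lemma measurable_g (u : ℝ) : Measurable (g u) := by
  unfold g; fun_prop

lemma measurable_P (d : ℕ) (u : ℝ) : Measurable (P d u) := by
  unfold P h g; fun_prop

lemma measurable_fb (d : ℕ) (u : ℝ) : Measurable (fb d u) := by
  unfold fb; fun_prop

/-- rpow with negative exponent as rpow of the inverse. -/
lemma rpow_neg_div (a e : ℝ) (ha : 0 < a) : a ^ (-e / 2) = (a⁻¹) ^ (e / 2) := by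
  rw [neg_div, Real.rpow_neg ha.le, ← Real.inv_rpow ha.le]

/-- Gaussian product pointwise. -/
lemma heatK_mul_heatK (d : ℕ) {s t : ℝ} (hs : 0 < s) (ht : 0 < t)
    (x : EuclideanSpace ℝ (Fin d)) :
    heatK d s x * heatK d t x
      = (h d s * h d t) * Real.exp (-((s + t) / (2 * s * t)) * ‖x‖ ^ 2) := by
  unfold heatK h
  rw [mul_mul_mul_comm, ← Real.exp_add]
  congr 1
  field_simp
  ring

lemma integrable_rexp_norm_sq (d : ℕ) {b : ℝ} (hb : 0 < b) :
    Integrable (fun x : EuclideanSpace ℝ (Fin d) => Real.exp (-b * ‖x‖ ^ 2)) := by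
  have hb' : (0 : ℝ) < ((b : ℂ)).re := by simpa using hb
  have h0 := GaussianFourier.integrable_cexp_neg_mul_sq_norm_add hb' 0
    (0 : EuclideanSpace ℝ (Fin d))
  have h1 : Integrable (fun x : EuclideanSpace ℝ (Fin d) =>
      Complex.exp (-(b : ℂ) * (‖x‖ : ℂ) ^ 2)) := by simpa using h0
  refine h1.norm.congr ?_
  filter_upwards with x
  rw [Complex.norm_exp]
  have e : (-(b : ℂ) * (‖x‖ : ℂ) ^ 2) = ((-b * ‖x‖ ^ 2 : ℝ) : ℂ) := by push_cast; ring
  rw [e, Complex.ofReal_re]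

lemma integrable_heatK_mul (d : ℕ) {s t : ℝ} (hs : 0 < s) (ht : 0 < t) :
    Integrable (fun x : EuclideanSpace ℝ (Fin d) => heatK d s x * heatK d t x) := by
  have hb : (0 : ℝ) < (s + t) / (2 * s * t) := by positivity
  have e : (fun x : EuclideanSpace ℝ (Fin d) => heatK d s x * heatK d t x)
      = fun x => (h d s * h d t) * Real.exp (-((s + t) / (2 * s * t)) * ‖x‖ ^ 2) := by
    funext x; exact heatK_mul_heatK d hs ht x
  rw [e]
  exact (integrable_rexp_norm_sq d hb).const_mul _

lemma integral_heatK_mul (d : ℕ) {s t : ℝ} (hs : 0 < s) (ht : 0 < t) :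
    ∫ x : EuclideanSpace ℝ (Fin d), heatK d s x * heatK d t x = h d (s + t) := by
  have hb : (0 : ℝ) < (s + t) / (2 * s * t) := by positivity
  have e : (fun x : EuclideanSpace ℝ (Fin d) => heatK d s x * heatK d t x)
      = fun x => (h d s * h d t) * Real.exp (-((s + t) / (2 * s * t)) * ‖x‖ ^ 2) := by
    funext x; exact heatK_mul_heatK d hs ht x
  rw [e, integral_const_mul, GaussianFourier.integral_rexp_neg_mul_sq_norm hb,
    finrank_euclideanSpace_fin]
  unfold h
  rw [rpow_neg_div _ _ (by positivity), rpow_neg_div _ _ (by positivity),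
    rpow_neg_div _ _ (by positivity), ← Real.mul_rpow (by positivity) (by positivity),
    ← Real.mul_rpow (by positivity) (by positivity)]
  congr 1
  field_simp

/-- Master one-dimensional integrability lemma. -/
lemma integrableOn_rpow_mul_exp {c a : ℝ} (hc0 : 0 ≤ c) (hc : c < 1) (ha : 0 < a) :
    IntegrableOn (fun r : ℝ => r ^ (-c) * Real.exp (-a * r ^ 2)) (Set.Ioi 0) := by
  have hmeas : Measurable fun r : ℝ => r ^ (-c) * Real.exp (-a * r ^ 2) := by fun_prop
  have h1 : IntegrableOn (fun r : ℝ => r ^ (-c) * Real.exp (-a * r ^ 2)) (Set.Ioc 0 1) := by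
    have hbase : IntegrableOn (fun r : ℝ => r ^ (-c)) (Set.Ioc 0 1) :=
      (intervalIntegral.intervalIntegrable_rpow' (a := 0) (b := 1) (by linarith)).1
    refine hbase.mono' hmeas.aestronglyMeasurable ?_
    filter_upwards [ae_restrict_mem measurableSet_Ioc] with r hr
    have hr0 : (0 : ℝ) < r := hr.1
    have hrn : (0 : ℝ) ≤ r ^ (-c) := Real.rpow_nonneg hr0.le _
    rw [Real.norm_eq_abs, abs_of_nonneg (mul_nonneg hrn (Real.exp_pos _).le)]
    have hle : Real.exp (-a * r ^ 2) ≤ 1 := Real.exp_le_one_iff.mpr (by nlinarith)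
    nlinarith [Real.exp_pos (-a * r ^ 2)]
  have h2 : IntegrableOn (fun r : ℝ => r ^ (-c) * Real.exp (-a * r ^ 2)) (Set.Ioi 1) := by
    refine ((integrable_exp_neg_mul_sq ha).integrableOn).mono' hmeas.aestronglyMeasurable ?_
    filter_upwards [ae_restrict_mem measurableSet_Ioi] with r hr
    have hr1 : (1 : ℝ) < r := hr
    have hr0 : (0 : ℝ) < r := lt_trans one_pos hr1
    have hrn : (0 : ℝ) ≤ r ^ (-c) := Real.rpow_nonneg hr0.le _
    rw [Real.norm_eq_abs, abs_of_nonneg (mul_nonneg hrn (Real.exp_pos _).le)]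
    have hle : r ^ (-c) ≤ 1 := Real.rpow_le_one_of_one_le_of_nonpos hr1.le (by linarith)
    nlinarith [Real.exp_pos (-a * r ^ 2)]
  have := h1.union h2
  rwa [Set.Ioc_union_Ioi_eq_Ioi zero_le_one] at this

lemma integrableOn_fb (d : ℕ) (hd3 : d ≤ 3) {u : ℝ} (hu : 0 < u) :
    IntegrableOn (fb d u) (Set.Ioi 0) := by
  have hd : ((d : ℝ) / 4) < 1 := by
    have : (d : ℝ) ≤ 3 := by exact_mod_cast hd3
    linarith
  have h0 := integrableOn_rpow_mul_exp (c := (d : ℝ) / 4) (a := (2 * u)⁻¹)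
    (by positivity) hd (by positivity)
  refine h0.congr_fun ?_ measurableSet_Ioi
  intro r _
  show r ^ (-((d:ℝ) / 4)) * Real.exp (-(2 * u)⁻¹ * r ^ 2) = fb d u r
  unfold fb
  congr 1
  congr 1
  field_simp

lemma P_nonneg (d : ℕ) {u r₁ r₂ : ℝ} (hu : 0 < u) (h1 : 0 < r₁) (h2 : 0 < r₂) :
    0 ≤ P d u (r₁, r₂) := (P_pos d hu h1 h2).le

/-- The key bound `P ≤ const * fb ⊗ fb` on the open quadrant. -/
lemma P_le (d : ℕ) {u r₁ r₂ : ℝ} (hu : 0 < u) (h1 : 0 < r₁) (h2 : 0 < r₂) :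
    P d u (r₁, r₂) ≤ ((2 * π) ^ (-(d : ℝ) / 2) *
      ((2 * π * u) ^ (-(1 : ℝ) / 2) * (2 * π * u) ^ (-(1 : ℝ) / 2))) *
      (fb d u r₁ * fb d u r₂) := by
  have hc : (0:ℝ) ≤ (d : ℝ) / 4 := by positivity
  have hh : h d (r₁ + r₂) ≤ (2 * π) ^ (-(d : ℝ) / 2) *
      (r₁ ^ (-((d : ℝ) / 4)) * r₂ ^ (-((d : ℝ) / 4))) := by
    unfold h
    rw [Real.mul_rpow (by positivity) (by linarith)]
    have e2 : (r₁ + r₂) ^ (-(d : ℝ) / 2)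
        = (r₁ + r₂) ^ (-((d : ℝ) / 4)) * (r₁ + r₂) ^ (-((d : ℝ) / 4)) := by
      rw [← Real.rpow_add (by linarith)]
      congr 1; ring
    rw [e2]
    have b1 : (r₁ + r₂) ^ (-((d : ℝ) / 4)) ≤ r₁ ^ (-((d : ℝ) / 4)) :=
      Real.rpow_le_rpow_of_nonpos h1 (by linarith) (by linarith)
    have b2 : (r₁ + r₂) ^ (-((d : ℝ) / 4)) ≤ r₂ ^ (-((d : ℝ) / 4)) :=
      Real.rpow_le_rpow_of_nonpos h2 (by linarith) (by linarith)
    have nn : (0:ℝ) ≤ (r₁ + r₂) ^ (-((d : ℝ) / 4)) := Real.rpow_nonneg (by linarith) _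
    gcongr
  calc P d u (r₁, r₂)
      = h d (r₁ + r₂) * (((2 * π * u) ^ (-(1 : ℝ) / 2) * Real.exp (-r₁ ^ 2 / (2 * u)))
        * ((2 * π * u) ^ (-(1 : ℝ) / 2) * Real.exp (-r₂ ^ 2 / (2 * u)))) := by
        unfold P g; ring
    _ ≤ ((2 * π) ^ (-(d : ℝ) / 2) * (r₁ ^ (-((d : ℝ) / 4)) * r₂ ^ (-((d : ℝ) / 4)))) *
        (((2 * π * u) ^ (-(1 : ℝ) / 2) * Real.exp (-r₁ ^ 2 / (2 * u)))
        * ((2 * π * u) ^ (-(1 : ℝ) / 2) * Real.exp (-r₂ ^ 2 / (2 * u)))) := by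
        refine mul_le_mul_of_nonneg_right hh ?_
        positivity
    _ = ((2 * π) ^ (-(d : ℝ) / 2) *
        ((2 * π * u) ^ (-(1 : ℝ) / 2) * (2 * π * u) ^ (-(1 : ℝ) / 2))) *
        (fb d u r₁ * fb d u r₂) := by unfold fb; ring

/-- abbreviation for the restricted measure -/
noncomputable abbrev ρ : Measure ℝ := volume.restrict (Set.Ioi (0 : ℝ))

lemma ae_mem_prod : ∀ᵐ p : ℝ × ℝ ∂(ρ.prod ρ), p.1 ∈ Set.Ioi (0:ℝ) ∧ p.2 ∈ Set.Ioi (0:ℝ) := by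
  have : (ρ.prod ρ) = (volume.prod volume).restrict
      ((Set.Ioi (0:ℝ)) ×ˢ (Set.Ioi (0:ℝ))) := Measure.prod_restrict _ _
  rw [this]
  filter_upwards [ae_restrict_mem (measurableSet_Ioi.prod measurableSet_Ioi)] with p hp
  exact hp

lemma integrable_P (d : ℕ) (hd3 : d ≤ 3) {u : ℝ} (hu : 0 < u) :
    Integrable (P d u) (ρ.prod ρ) := by
  have hf : Integrable (fb d u) ρ := integrableOn_fb d hd3 hu
  have hbound : Integrable (fun p : ℝ × ℝ => ((2 * π) ^ (-(d : ℝ) / 2) *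
      ((2 * π * u) ^ (-(1 : ℝ) / 2) * (2 * π * u) ^ (-(1 : ℝ) / 2))) *
      (fb d u p.1 * fb d u p.2)) (ρ.prod ρ) := (hf.mul_prod hf).const_mul _
  refine hbound.mono' ((measurable_P d u).aestronglyMeasurable) ?_
  filter_upwards [ae_mem_prod] with p hp
  obtain ⟨h1, h2⟩ := hp
  rw [Real.norm_eq_abs, abs_of_nonneg]
  · calc P d u p = P d u (p.1, p.2) := by rfl
      _ ≤ _ := P_le d hu h1 h2
  · exact P_nonneg d hu h1 h2

lemma heatK_nonneg (d : ℕ) {r : ℝ} (hr : 0 < r) (x : EuclideanSpace ℝ (Fin d)) :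
    0 ≤ heatK d r x := by
  unfold heatK; positivity

/-- The joint integrand. -/
noncomputable def q (d : ℕ) (u r : ℝ) (x : EuclideanSpace ℝ (Fin d)) : ℝ :=
  heatK d r x * g u r

lemma q_nonneg (d : ℕ) {u r : ℝ} (hu : 0 < u) (hr : 0 < r) (x : EuclideanSpace ℝ (Fin d)) :
    0 ≤ q d u r x :=
  mul_nonneg (heatK_nonneg d hr x) (g_pos hu r).le

lemma integral_q_mul (d : ℕ) {u : ℝ} (p : ℝ × ℝ) (h1 : 0 < p.1) (h2 : 0 < p.2) :
    ∫ x : EuclideanSpace ℝ (Fin d), q d u p.1 x * q d u p.2 x = P d u p := by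
  have e : (fun x : EuclideanSpace ℝ (Fin d) => q d u p.1 x * q d u p.2 x)
      = fun x => (heatK d p.1 x * heatK d p.2 x) * (g u p.1 * g u p.2) := by
    funext x; unfold q; ring
  rw [e, integral_mul_const, integral_heatK_mul d h1 h2]
  unfold P; ring

lemma twoBtK_eq_iterated (d : ℕ) (u : ℝ) :
    twoBtK d u u = 4 * ∫ r₁ in Set.Ioi (0:ℝ), ∫ r₂ in Set.Ioi (0:ℝ), P d u (r₁, r₂) := by
  unfold twoBtK P h g
  rfl

lemma twoBtK_eq_integral_sq (d : ℕ) (hd3 : d ≤ 3) {u : ℝ} (hu : 0 < u) :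
    twoBtK d u u = ∫ x : EuclideanSpace ℝ (Fin d), (btbmK d u x) ^ 2 := by
  have hWmeas : AEStronglyMeasurable
      (fun z : (ℝ × ℝ) × EuclideanSpace ℝ (Fin d) => q d u z.1.1 z.2 * q d u z.1.2 z.2)
      ((ρ.prod ρ).prod volume) := by
    apply Measurable.aestronglyMeasurable
    unfold q g heatK
    fun_prop
  have hW : Integrable
      (fun z : (ℝ × ℝ) × EuclideanSpace ℝ (Fin d) => q d u z.1.1 z.2 * q d u z.1.2 z.2)
      ((ρ.prod ρ).prod volume) := by
    rw [MeasureTheory.integrable_prod_iff hWmeas]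
    constructor
    · filter_upwards [ae_mem_prod] with p hp
      have base : Integrable (fun x : EuclideanSpace ℝ (Fin d) =>
          (heatK d p.1 x * heatK d p.2 x) * (g u p.1 * g u p.2)) volume :=
        (integrable_heatK_mul d hp.1 hp.2).mul_const _
      refine base.congr (Filter.Eventually.of_forall fun x => ?_)
      show (heatK d p.1 x * heatK d p.2 x) * (g u p.1 * g u p.2)
          = q d u p.1 x * q d u p.2 x
      unfold q; ring
    · refine (integrable_P d hd3 hu).congr ?_
      filter_upwards [ae_mem_prod] with p hp
      have hnn : ∀ x : EuclideanSpace ℝ (Fin d), 0 ≤ q d u p.1 x * q d u p.2 x := fun x =>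
        mul_nonneg (q_nonneg d hu hp.1 x) (q_nonneg d hu hp.2 x)
      calc P d u p = ∫ x : EuclideanSpace ℝ (Fin d), q d u p.1 x * q d u p.2 x :=
            (integral_q_mul d p hp.1 hp.2).symm
        _ = ∫ x : EuclideanSpace ℝ (Fin d), ‖q d u p.1 x * q d u p.2 x‖ := by
            refine integral_congr_ae (Filter.Eventually.of_forall fun x => ?_)
            show q d u p.1 x * q d u p.2 x = ‖q d u p.1 x * q d u p.2 x‖
            exact (Real.norm_of_nonneg (hnn x)).symm
  have hpt : ∀ x : EuclideanSpace ℝ (Fin d),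
      (btbmK d u x) ^ 2 = 4 * ∫ p, q d u p.1 x * q d u p.2 x ∂(ρ.prod ρ) := by
    intro x
    have hb : btbmK d u x = 2 * ∫ r, q d u r x ∂ρ := rfl
    have hm := MeasureTheory.integral_prod_mul (μ := ρ) (ν := ρ)
      (fun r => q d u r x) (fun r => q d u r x)
    rw [hb, hm]
    ring
  calc twoBtK d u u
      = 4 * ∫ r₁ in Set.Ioi (0:ℝ), ∫ r₂ in Set.Ioi (0:ℝ), P d u (r₁, r₂) :=
        twoBtK_eq_iterated d u
    _ = 4 * ∫ p, P d u p ∂(ρ.prod ρ) := by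
        rw [MeasureTheory.integral_prod _ (integrable_P d hd3 hu)]
    _ = 4 * ∫ p, (∫ x : EuclideanSpace ℝ (Fin d), q d u p.1 x * q d u p.2 x) ∂(ρ.prod ρ) := by
        congr 1
        refine integral_congr_ae ?_
        filter_upwards [ae_mem_prod] with p hp
        exact (integral_q_mul d p hp.1 hp.2).symm
    _ = 4 * ∫ x : EuclideanSpace ℝ (Fin d), ∫ p, q d u p.1 x * q d u p.2 x ∂(ρ.prod ρ) := by
        congr 1
        exact MeasureTheory.integral_integral_swap hW
    _ = ∫ x : EuclideanSpace ℝ (Fin d), (btbmK d u x) ^ 2 := by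
        rw [← integral_const_mul]
        exact integral_congr_ae (Filter.Eventually.of_forall fun x => (hpt x).symm)

lemma g_scale {u : ℝ} (hu : 0 < u) (s : ℝ) :
    g u (Real.sqrt u * s) = u ^ (-(1:ℝ)/2) * g 1 s := by
  unfold g
  have h1 : (2 * π * u : ℝ) ^ (-(1:ℝ)/2) = (2 * π * 1 : ℝ) ^ (-(1:ℝ)/2) * u ^ (-(1:ℝ)/2) := by
    rw [mul_one, Real.mul_rpow (by positivity) hu.le]
  have h2 : (Real.sqrt u * s) ^ 2 = u * s ^ 2 := by
    rw [mul_pow, Real.sq_sqrt hu.le]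
  rw [h1, h2]
  have h3 : -(u * s ^ 2) / (2 * u) = -s ^ 2 / (2 * 1) := by
    field_simp
  rw [h3]
  ring

lemma h_scale (d : ℕ) {u : ℝ} (hu : 0 < u) {s₁ s₂ : ℝ} (h1 : 0 ≤ s₁) (h2 : 0 ≤ s₂) :
    h d (Real.sqrt u * s₁ + Real.sqrt u * s₂) = u ^ (-(d:ℝ)/4) * h d (s₁ + s₂) := by
  unfold h
  rw [← mul_add]
  have e1 : 2 * π * (Real.sqrt u * (s₁ + s₂)) = (2 * π * (s₁ + s₂)) * Real.sqrt u := by ring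
  rw [e1, Real.mul_rpow (mul_nonneg (by positivity) (by linarith)) (Real.sqrt_nonneg u)]
  have e2 : (Real.sqrt u) ^ (-(d:ℝ)/2) = u ^ (-(d:ℝ)/4) := by
    rw [Real.sqrt_eq_rpow, ← Real.rpow_mul hu.le,
      show (1/(2:ℝ)) * (-(d:ℝ)/2) = -(d:ℝ)/4 by ring]
  rw [e2]
  ring

lemma twoBtK_scaling (d : ℕ) {u : ℝ} (hu : 0 < u) :
    twoBtK d u u = twoBtK d 1 1 * u ^ (-(d:ℝ)/4) := by
  have hsq : 0 < Real.sqrt u := Real.sqrt_pos.mpr hu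
  have subst : ∀ G : ℝ → ℝ, (∫ r in Set.Ioi (0:ℝ), G r)
      = Real.sqrt u * ∫ s in Set.Ioi (0:ℝ), G (Real.sqrt u * s) := by
    intro G
    rw [MeasureTheory.integral_comp_mul_left_Ioi G 0 hsq, mul_zero, smul_eq_mul,
      ← mul_assoc, mul_inv_cancel₀ hsq.ne', one_mul]
  have step_inner : ∀ r₁ : ℝ, (∫ r₂ in Set.Ioi (0:ℝ), h d (r₁ + r₂) * g u r₁ * g u r₂)
      = Real.sqrt u * ∫ s₂ in Set.Ioi (0:ℝ),
          h d (r₁ + Real.sqrt u * s₂) * g u r₁ * g u (Real.sqrt u * s₂) :=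
    fun r₁ => subst (fun r₂ => h d (r₁ + r₂) * g u r₁ * g u r₂)
  calc twoBtK d u u
      = 4 * ∫ r₁ in Set.Ioi (0:ℝ), ∫ r₂ in Set.Ioi (0:ℝ), h d (r₁ + r₂) * g u r₁ * g u r₂ := by
        unfold twoBtK h g; rfl
    _ = 4 * ∫ r₁ in Set.Ioi (0:ℝ), Real.sqrt u * ∫ s₂ in Set.Ioi (0:ℝ),
          h d (r₁ + Real.sqrt u * s₂) * g u r₁ * g u (Real.sqrt u * s₂) := by
        congr 1
        exact integral_congr_ae (Filter.Eventually.of_forall step_inner)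
    _ = 4 * (Real.sqrt u * ∫ r₁ in Set.Ioi (0:ℝ), ∫ s₂ in Set.Ioi (0:ℝ),
          h d (r₁ + Real.sqrt u * s₂) * g u r₁ * g u (Real.sqrt u * s₂)) := by
        rw [integral_const_mul]
    _ = 4 * (Real.sqrt u * (Real.sqrt u * ∫ s₁ in Set.Ioi (0:ℝ), ∫ s₂ in Set.Ioi (0:ℝ),
          h d (Real.sqrt u * s₁ + Real.sqrt u * s₂) * g u (Real.sqrt u * s₁)
            * g u (Real.sqrt u * s₂))) := by
        congr 2
        exact subst (fun r₁ => ∫ s₂ in Set.Ioi (0:ℝ),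
          h d (r₁ + Real.sqrt u * s₂) * g u r₁ * g u (Real.sqrt u * s₂))
    _ = 4 * (Real.sqrt u * (Real.sqrt u * ∫ s₁ in Set.Ioi (0:ℝ),
          (u ^ (-(d:ℝ)/4) * u ^ (-(1:ℝ)/2) * u ^ (-(1:ℝ)/2)) *
          ∫ s₂ in Set.Ioi (0:ℝ), h d (s₁ + s₂) * g 1 s₁ * g 1 s₂)) := by
        congr 3
        refine setIntegral_congr_fun measurableSet_Ioi (fun s₁ hs₁ => ?_)
        rw [← integral_const_mul]
        refine setIntegral_congr_fun measurableSet_Ioi (fun s₂ hs₂ => ?_)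
        rw [h_scale d hu (le_of_lt hs₁) (le_of_lt hs₂), g_scale hu s₁, g_scale hu s₂]
        ring
    _ = 4 * (Real.sqrt u * (Real.sqrt u *
          ((u ^ (-(d:ℝ)/4) * u ^ (-(1:ℝ)/2) * u ^ (-(1:ℝ)/2)) *
          ∫ s₁ in Set.Ioi (0:ℝ), ∫ s₂ in Set.Ioi (0:ℝ), h d (s₁ + s₂) * g 1 s₁ * g 1 s₂))) := by
        congr 3
        exact integral_const_mul _ _
    _ = (4 * ∫ s₁ in Set.Ioi (0:ℝ), ∫ s₂ in Set.Ioi (0:ℝ), h d (s₁ + s₂) * g 1 s₁ * g 1 s₂)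
          * u ^ (-(d:ℝ)/4) := by
        have e1 : Real.sqrt u * Real.sqrt u = u := Real.mul_self_sqrt hu.le
        have e2 : u ^ (-(1:ℝ)/2) * u ^ (-(1:ℝ)/2) = u⁻¹ := by
          rw [← Real.rpow_add hu, show (-(1:ℝ)/2 + -(1:ℝ)/2) = (-1 : ℝ) by norm_num,
            Real.rpow_neg_one]
        set T := ∫ s₁ in Set.Ioi (0:ℝ), ∫ s₂ in Set.Ioi (0:ℝ), h d (s₁ + s₂) * g 1 s₁ * g 1 s₂
        calc 4 * (Real.sqrt u * (Real.sqrt u *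
              (u ^ (-(d:ℝ)/4) * u ^ (-(1:ℝ)/2) * u ^ (-(1:ℝ)/2) * T)))
            = 4 * ((Real.sqrt u * Real.sqrt u) * ((u ^ (-(1:ℝ)/2) * u ^ (-(1:ℝ)/2)) *
              (u ^ (-(d:ℝ)/4) * T))) := by ring
          _ = 4 * (u * (u⁻¹ * (u ^ (-(d:ℝ)/4) * T))) := by rw [e1, e2]
          _ = (4 * T) * u ^ (-(d:ℝ)/4) := by
              field_simp
    _ = twoBtK d 1 1 * u ^ (-(d:ℝ)/4) := by
        congr 1

lemma twoBtK_pos (d : ℕ) (hd3 : d ≤ 3) : 0 < twoBtK d 1 1 := by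
  have hint : Integrable (P d 1) (ρ.prod ρ) := integrable_P d hd3 one_pos
  have inner_int : ∀ r₁ : ℝ, 0 < r₁ →
      IntegrableOn (fun r₂ => P d 1 (r₁, r₂)) (Set.Ioi 0) := by
    intro r₁ h1
    have hfb : Integrable (fun r₂ => (((2 * π) ^ (-(d:ℝ)/2) *
        ((2 * π * (1:ℝ)) ^ (-(1:ℝ)/2) * (2 * π * (1:ℝ)) ^ (-(1:ℝ)/2))) * fb d 1 r₁)
        * fb d 1 r₂) ρ :=
      (integrableOn_fb d hd3 one_pos).const_mul _
    refine hfb.mono' ?_ ?_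
    · exact ((measurable_P d 1).comp (measurable_const.prodMk measurable_id)).aestronglyMeasurable
    · filter_upwards [ae_restrict_mem measurableSet_Ioi] with r₂ h2
      rw [Real.norm_eq_abs, abs_of_nonneg (P_nonneg d one_pos h1 h2)]
      calc P d 1 (r₁, r₂)
          ≤ ((2 * π) ^ (-(d:ℝ)/2) *
            ((2 * π * (1:ℝ)) ^ (-(1:ℝ)/2) * (2 * π * (1:ℝ)) ^ (-(1:ℝ)/2))) *
            (fb d 1 r₁ * fb d 1 r₂) := P_le d one_pos h1 h2
        _ = _ := by ring
  have inner_pos : ∀ r₁ : ℝ, 0 < r₁ →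
      0 < ∫ r₂ in Set.Ioi (0:ℝ), P d 1 (r₁, r₂) := by
    intro r₁ h1
    rw [setIntegral_pos_iff_support_of_nonneg_ae ?_ (inner_int r₁ h1)]
    · have hsub : Set.Ioi (0:ℝ) ⊆
          Function.support (fun r₂ => P d 1 (r₁, r₂)) ∩ Set.Ioi 0 :=
        fun r₂ h2 => ⟨(P_pos d one_pos h1 h2).ne', h2⟩
      calc (0:ENNReal) < volume (Set.Ioi (0:ℝ)) := by
            rw [Real.volume_Ioi]; exact ENNReal.zero_lt_top
        _ ≤ _ := measure_mono hsub
    · filter_upwards [ae_restrict_mem measurableSet_Ioi] with r₂ h2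
      exact P_nonneg d one_pos h1 h2
  have outer_int : IntegrableOn (fun r₁ => ∫ r₂ in Set.Ioi (0:ℝ), P d 1 (r₁, r₂))
      (Set.Ioi 0) := hint.integral_prod_left
  have outer_pos : 0 < ∫ r₁ in Set.Ioi (0:ℝ), ∫ r₂ in Set.Ioi (0:ℝ), P d 1 (r₁, r₂) := by
    rw [setIntegral_pos_iff_support_of_nonneg_ae ?_ outer_int]
    · have hsub : Set.Ioi (0:ℝ) ⊆
          Function.support (fun r₁ => ∫ r₂ in Set.Ioi (0:ℝ), P d 1 (r₁, r₂)) ∩ Set.Ioi 0 :=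
        fun r₁ h1 => ⟨(inner_pos r₁ h1).ne', h1⟩
      calc (0:ENNReal) < volume (Set.Ioi (0:ℝ)) := by
            rw [Real.volume_Ioi]; exact ENNReal.zero_lt_top
        _ ≤ _ := measure_mono hsub
    · filter_upwards [ae_restrict_mem measurableSet_Ioi] with r₁ h1
      exact (inner_pos r₁ h1).le
  rw [twoBtK_eq_iterated d 1]
  linarith

end TwoBtAux

theorem twoBtK_diagonal_strictAnti (d : ℕ) (hd1 : 1 ≤ d) (hd3 : d ≤ 3) :
    ∃ C > (0 : ℝ),
      (∀ u > (0 : ℝ),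
        twoBtK d u u = ∫ x : EuclideanSpace ℝ (Fin d), (btbmK d u x) ^ 2 ∧
        twoBtK d u u = C * u ^ (-(d : ℝ) / 4)) ∧
      StrictAntiOn (fun u => twoBtK d u u) (Set.Ioi (0 : ℝ)) := by
  refine ⟨twoBtK d 1 1, TwoBtAux.twoBtK_pos d hd3,
    fun u hu => ⟨TwoBtAux.twoBtK_eq_integral_sq d hd3 hu, TwoBtAux.twoBtK_scaling d hu⟩, ?_⟩
  intro u hu v hv huv
  have h1 := TwoBtAux.twoBtK_scaling d (show (0:ℝ) < u from hu)
  have h2 := TwoBtAux.twoBtK_scaling d (show (0:ℝ) < v from hv)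
  simp only []
  rw [h1, h2]
  have he : -(d:ℝ)/4 < 0 := by
    have : (1:ℝ) ≤ (d:ℝ) := by exact_mod_cast hd1
    linarith
  exact mul_lt_mul_of_pos_left
    (Real.rpow_lt_rpow_of_neg (show (0:ℝ) < u from hu) huv he)
    (TwoBtAux.twoBtK_pos d hd3)
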